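/- Let C ⊆ F_2^n be a linear code of dimension k ≥ 1 and minimum distance D, with encoder enc_C and any decoder dec_C. Let P_fail(C) = max over messages v of Pr[dec_C(enc_C(v) + η) ≠ v] where η ~ Ber(p)^n with p ∈ (0, 1/2). Then Pr[||η'|| > D/2] + (1/2)·Pr[||η'|| = D/2] ≤ P_fail(C), where η' ~ Ber(p)^D. -/

import Mathlib

/-- Probability of the event `E` under the `Ber(p)^m` distribution on `F_2^m`:
each coordinate is `1` independently with probability `p`. -/
def bernPr (p : ℝ) {m : ℕ} (E : Finset (Fin m → ZMod 2)) : ℝ :=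
  ∑ η ∈ E, p ^ hammingNorm η * (1 - p) ^ (m - hammingNorm η)

lemma hammingNorm_le' {m : ℕ} (η : Fin m → ZMod 2) : hammingNorm η ≤ m := by
  simpa [hammingNorm] using (Finset.card_filter_le Finset.univ (fun i => η i ≠ 0))

lemma weight_prod {m : ℕ} (p : ℝ) (η : Fin m → ZMod 2) :
    p ^ hammingNorm η * (1 - p) ^ (m - hammingNorm η)
      = ∏ i, (if η i = 0 then (1 - p) else p) := by
  rw [Finset.prod_ite, Finset.prod_const, Finset.prod_const]
  have h1 : (Finset.filter (fun i => ¬ η i = 0) Finset.univ).card = hammingNorm η := rfl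
  have h2 : (Finset.filter (fun i => η i = 0) Finset.univ).card
      + (Finset.filter (fun i => ¬ η i = 0) Finset.univ).card = m := by
    rw [Finset.card_filter_add_card_filter_not]; simp
  rw [h1]
  have : (Finset.filter (fun i => η i = 0) Finset.univ).card = m - hammingNorm η := by omega
  rw [this, mul_comm]

lemma sum_prod_fn {m : ℕ} (f : ZMod 2 → ℝ) :
    ∑ η : Fin m → ZMod 2, ∏ i, f (η i) = (f 0 + f 1) ^ m := by
  induction m with
  | zero => simp
  | succ m ih =>
    rw [← (Fin.consEquiv fun _ : Fin (m + 1) => ZMod 2).sum_comp, Fintype.sum_prod_type]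
    have : ∀ (x : ZMod 2) (v : Fin m → ZMod 2),
        ∏ i, f ((Fin.consEquiv fun _ : Fin (m + 1) => ZMod 2) (x, v) i) = f x * ∏ i, f (v i) := by
      intro x v
      rw [Fin.prod_univ_succ]
      simp [Fin.consEquiv]
    simp_rw [this]
    rw [← Finset.sum_mul_sum]
    have : ∑ x : ZMod 2, f x = f 0 + f 1 := by
      rw [show (Finset.univ : Finset (ZMod 2)) = {0, 1} from by decide]
      simp
    rw [this, ih, pow_succ]
    ring

lemma bernPr_univ (p : ℝ) (m : ℕ) : bernPr p (Finset.univ : Finset (Fin m → ZMod 2)) = 1 := by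
  unfold bernPr
  have hw : ∀ η : Fin m → ZMod 2, p ^ hammingNorm η * (1 - p) ^ (m - hammingNorm η)
      = ∏ i, (fun z : ZMod 2 => if z = 0 then (1 - p) else p) (η i) := fun η => weight_prod p η
  simp_rw [hw]
  have h := sum_prod_fn (m := m) (fun z : ZMod 2 => if z = 0 then (1 - p) else p)
  simpa using h

lemma norm_compl {m : ℕ} (a : Fin m → ZMod 2) :
    hammingNorm (fun i => a i + 1) = m - hammingNorm a := by
  have hz : ∀ z : ZMod 2, ¬ z + 1 = 0 ↔ z = 0 := by decide
  have e1 : (Finset.filter (fun i => ¬ (a i + 1 = 0)) Finset.univ)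
      = Finset.filter (fun i => a i = 0) (Finset.univ : Finset (Fin m)) := by
    ext i; simp [hz (a i)]
  have h2 : (Finset.filter (fun i => a i = 0) Finset.univ).card
      + (Finset.filter (fun i => ¬ a i = 0) Finset.univ).card = m := by
    rw [Finset.card_filter_add_card_filter_not]; simp
  have h1 : hammingNorm a = (Finset.filter (fun i => ¬ a i = 0) Finset.univ).card := rfl
  have h0 : hammingNorm (fun i => a i + 1)
      = (Finset.filter (fun i => ¬ (a i + 1 = 0)) Finset.univ).card := rfl
  rw [h0, e1]; omega

lemma g_anti {p : ℝ} (hp0 : 0 < p) (hp : p < 1/2) {D w₁ w₂ : ℕ}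
    (h1 : w₁ ≤ w₂) (h2 : w₂ ≤ D) :
    p ^ w₂ * (1 - p) ^ (D - w₂) ≤ p ^ w₁ * (1 - p) ^ (D - w₁) := by
  have hq : (0:ℝ) < 1 - p := by linarith
  have e1 : p ^ w₂ = p ^ w₁ * p ^ (w₂ - w₁) := by rw [← pow_add]; congr 1; omega
  have e2 : (1 - p) ^ (D - w₁) = (1 - p) ^ (D - w₂) * (1 - p) ^ (w₂ - w₁) := by
    rw [← pow_add]; congr 1; omega
  have key : p ^ (w₂ - w₁) ≤ (1 - p) ^ (w₂ - w₁) :=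
    pow_le_pow_left₀ hp0.le (by linarith) _
  calc p ^ w₂ * (1 - p) ^ (D - w₂)
      = (p ^ w₁ * (1 - p) ^ (D - w₂)) * p ^ (w₂ - w₁) := by rw [e1]; ring
    _ ≤ (p ^ w₁ * (1 - p) ^ (D - w₂)) * (1 - p) ^ (w₂ - w₁) := by
        apply mul_le_mul_of_nonneg_left key; positivity
    _ = p ^ w₁ * (1 - p) ^ (D - w₁) := by rw [e2]; ring

lemma stepC {p : ℝ} (hp0 : 0 < p) (hp : p < 1/2) (D : ℕ) :
    2 * bernPr p (Finset.univ.filter fun η : Fin D → ZMod 2 => D < 2 * hammingNorm η)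
      + bernPr p (Finset.univ.filter fun η : Fin D → ZMod 2 => 2 * hammingNorm η = D)
    = ∑ a : Fin D → ZMod 2,
        min (p ^ hammingNorm a * (1 - p) ^ (D - hammingNorm a))
            (p ^ (D - hammingNorm a) * (1 - p) ^ hammingNorm a) := by
  have hpt : ∀ a : Fin D → ZMod 2,
      min (p ^ hammingNorm a * (1 - p) ^ (D - hammingNorm a))
          (p ^ (D - hammingNorm a) * (1 - p) ^ hammingNorm a)
      = (if D < 2 * hammingNorm a then p ^ hammingNorm a * (1 - p) ^ (D - hammingNorm a) else 0)
        + (if 2 * hammingNorm a < D then p ^ (D - hammingNorm a) * (1 - p) ^ hammingNorm a else 0)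
        + (if 2 * hammingNorm a = D then p ^ hammingNorm a * (1 - p) ^ (D - hammingNorm a) else 0) := by
    intro a
    have hle := hammingNorm_le' a
    have hback : D - (D - hammingNorm a) = hammingNorm a := by omega
    rcases Nat.lt_trichotomy (2 * hammingNorm a) D with h | h | h
    · rw [if_neg (by omega), if_pos h, if_neg (by omega)]
      rw [min_eq_right]
      · ring
      · have := g_anti hp0 hp (D := D) (w₁ := hammingNorm a) (w₂ := D - hammingNorm a)
          (by omega) (by omega)
        rwa [hback] at this
    · have heq : D - hammingNorm a = hammingNorm a := by omega
      rw [if_neg (by omega), if_neg (by omega), if_pos h, heq, min_self]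
      ring
    · rw [if_pos h, if_neg (by omega), if_neg (by omega)]
      rw [min_eq_left]
      · ring
      · have := g_anti hp0 hp (D := D) (w₁ := D - hammingNorm a) (w₂ := hammingNorm a)
          (by omega) (by omega)
        rwa [hback] at this
  simp_rw [hpt]
  rw [Finset.sum_add_distrib, Finset.sum_add_distrib]
  have hS1 : ∑ a : Fin D → ZMod 2,
      (if D < 2 * hammingNorm a then p ^ hammingNorm a * (1 - p) ^ (D - hammingNorm a) else 0)
      = bernPr p (Finset.univ.filter fun η : Fin D → ZMod 2 => D < 2 * hammingNorm η) := by
    rw [bernPr, Finset.sum_filter]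
  have hS3 : ∑ a : Fin D → ZMod 2,
      (if 2 * hammingNorm a = D then p ^ hammingNorm a * (1 - p) ^ (D - hammingNorm a) else 0)
      = bernPr p (Finset.univ.filter fun η : Fin D → ZMod 2 => 2 * hammingNorm η = D) := by
    rw [bernPr, Finset.sum_filter]
  have hS2 : ∑ a : Fin D → ZMod 2,
      (if 2 * hammingNorm a < D then p ^ (D - hammingNorm a) * (1 - p) ^ hammingNorm a else 0)
      = ∑ a : Fin D → ZMod 2,
      (if D < 2 * hammingNorm a then p ^ hammingNorm a * (1 - p) ^ (D - hammingNorm a) else 0) := by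
    have := Equiv.sum_comp (Equiv.addRight (1 : Fin D → ZMod 2))
      (fun a : Fin D → ZMod 2 =>
        if 2 * hammingNorm a < D then p ^ (D - hammingNorm a) * (1 - p) ^ hammingNorm a else 0)
    rw [← this]
    apply Finset.sum_congr rfl
    intro a _
    have hone : (Equiv.addRight (1 : Fin D → ZMod 2)) a = fun i => a i + 1 := rfl
    rw [hone]
    have hna : hammingNorm (fun i => a i + 1) = D - hammingNorm a := norm_compl a
    have hle := hammingNorm_le' a
    rw [hna]
    by_cases hcase : D < 2 * hammingNorm a
    · rw [if_pos (by omega), if_pos hcase]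
      congr 2
      omega
    · rw [if_neg (by omega), if_neg hcase]
  rw [hS2, hS1, hS3]
  ring

/-- For a linear code `C ⊆ F_2^n` of dimension `k ≥ 1` with minimum distance `D`
(encoder `enc`, arbitrary decoder `dec`) and `p ∈ (0, 1/2)`:
`Pr[‖η'‖ > D/2] + (1/2)·Pr[‖η'‖ = D/2] ≤ P_fail(C)`, where `η' ∼ Ber(p)^D` and
`P_fail(C) = max_v Pr[dec(enc v + η) ≠ v]` with `η ∼ Ber(p)^n`. -/
theorem half_distance_noise_lower_bounds_pfail (n k D : ℕ) (hk : 1 ≤ k)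
    (p : ℝ) (hp0 : 0 < p) (hp : p < 1 / 2)
    (enc : (Fin k → ZMod 2) →ₗ[ZMod 2] (Fin n → ZMod 2)) (hinj : Function.Injective enc)
    (dec : (Fin n → ZMod 2) → (Fin k → ZMod 2))
    (hDle : ∀ x y : Fin k → ZMod 2, x ≠ y → D ≤ hammingDist (enc x) (enc y))
    (hDeq : ∃ x y : Fin k → ZMod 2, x ≠ y ∧ hammingDist (enc x) (enc y) = D) :
    bernPr p (Finset.univ.filter fun η : Fin D → ZMod 2 => D < 2 * hammingNorm η)
      + (1 / 2) * bernPr p (Finset.univ.filter fun η : Fin D → ZMod 2 =>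
          2 * hammingNorm η = D)
    ≤ ⨆ v : Fin k → ZMod 2,
        bernPr p (Finset.univ.filter fun η : Fin n → ZMod 2 => dec (enc v + η) ≠ v) := by
  obtain ⟨x, y, hxy, hdist⟩ := hDeq
  have hcnorm : hammingNorm (enc x - enc y) = D := by
    rw [sub_eq_neg_add, ← hammingDist_eq_hammingNorm, hammingDist_comm]; exact hdist
  set c : Fin n → ZMod 2 := enc x - enc y with hc
  have hDn : D ≤ n := by
    rw [← hdist]
    simpa using (hammingDist_le_card_fintype (x := enc x) (y := enc y))
  have hcard1 : Fintype.card {i : Fin n // c i ≠ 0} = D := by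
    rw [Fintype.card_subtype]; exact hcnorm
  have hcard2 : Fintype.card {i : Fin n // ¬ c i ≠ 0} = n - D := by
    rw [Fintype.card_subtype_compl, hcard1, Fintype.card_fin]
  set e : Fin n ≃ (Fin D ⊕ Fin (n - D)) :=
    (Equiv.sumCompl (fun i => c i ≠ 0)).symm.trans
      (Equiv.sumCongr (Fintype.equivFinOfCardEq hcard1) (Fintype.equivFinOfCardEq hcard2))
    with he
  have one_of : ∀ z : ZMod 2, z ≠ 0 → z = 1 := by decide
  have he1 : ∀ j, c (e.symm (Sum.inl j)) = 1 := by
    intro j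
    have h0 : e.symm (Sum.inl j)
        = (((Fintype.equivFinOfCardEq hcard1).symm j : {i // c i ≠ 0}) : Fin n) := rfl
    rw [h0]
    exact one_of _ ((Fintype.equivFinOfCardEq hcard1).symm j).prop
  have he2 : ∀ j, c (e.symm (Sum.inr j)) = 0 := by
    intro j
    have h0 : e.symm (Sum.inr j)
        = (((Fintype.equivFinOfCardEq hcard2).symm j : {i // ¬ c i ≠ 0}) : Fin n) := rfl
    rw [h0]
    exact not_not.mp ((Fintype.equivFinOfCardEq hcard2).symm j).prop
  set Φ : ((Fin D → ZMod 2) × (Fin (n - D) → ZMod 2)) ≃ (Fin n → ZMod 2) :=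
    (Equiv.sumArrowEquivProdArrow (Fin D) (Fin (n - D)) (ZMod 2)).symm.trans
      (Equiv.arrowCongr e.symm (Equiv.refl (ZMod 2))) with hPhi
  have hΦ : ∀ a b i, Φ (a, b) i = Sum.elim a b (e i) := fun a b i => rfl
  have K1 : ∀ a b, hammingNorm (Φ (a, b)) = hammingNorm a + hammingNorm b := by
    intro a b
    have hcf : ∀ {m'} (η : Fin m' → ZMod 2),
        hammingNorm η = ∑ i, if η i ≠ 0 then 1 else 0 := by
      intro m' η; exact Finset.card_filter _ _
    rw [hcf (Φ (a, b)), ← Equiv.sum_comp e.symm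
      (fun i => if Φ (a, b) i ≠ 0 then 1 else 0), Fintype.sum_sum_type]
    have l1 : ∀ j, Φ (a, b) (e.symm (Sum.inl j)) = a j := by
      intro j; rw [hΦ, Equiv.apply_symm_apply]; rfl
    have l2 : ∀ j, Φ (a, b) (e.symm (Sum.inr j)) = b j := by
      intro j; rw [hΦ, Equiv.apply_symm_apply]; rfl
    simp_rw [l1, l2]
    rw [← hcf a, ← hcf b]
  have K2 : ∀ a b, Φ (a, b) + c = Φ (fun j => a j + 1, b) := by
    intro a b
    funext i
    rw [Pi.add_apply, hΦ, hΦ]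
    rcases hsum : e i with j | j
    · have hi : i = e.symm (Sum.inl j) := by rw [← hsum, Equiv.symm_apply_apply]
      rw [hi, he1]
      simp
    · have hi : i = e.symm (Sum.inr j) := by rw [← hsum, Equiv.symm_apply_apply]
      rw [hi, he2]
      simp
  have hq0 : (0:ℝ) < 1 - p := by linarith
  have hW0 : ∀ (m : ℕ) (η : Fin m → ZMod 2),
      0 ≤ p ^ hammingNorm η * (1 - p) ^ (m - hammingNorm η) := by
    intro m η; positivity
  -- Step B : factorization of the middle sum
  have keyB : ∑ η : Fin n → ZMod 2,
      min (p ^ hammingNorm η * (1 - p) ^ (n - hammingNorm η))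
          (p ^ hammingNorm (η + c) * (1 - p) ^ (n - hammingNorm (η + c)))
      = ∑ a : Fin D → ZMod 2,
          min (p ^ hammingNorm a * (1 - p) ^ (D - hammingNorm a))
              (p ^ (D - hammingNorm a) * (1 - p) ^ hammingNorm a) := by
    rw [← Equiv.sum_comp Φ (fun η => min (p ^ hammingNorm η * (1 - p) ^ (n - hammingNorm η))
          (p ^ hammingNorm (η + c) * (1 - p) ^ (n - hammingNorm (η + c)))),
      Fintype.sum_prod_type]
    have hterm : ∀ (a : Fin D → ZMod 2) (b : Fin (n - D) → ZMod 2),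
        min (p ^ hammingNorm (Φ (a, b)) * (1 - p) ^ (n - hammingNorm (Φ (a, b))))
            (p ^ hammingNorm (Φ (a, b) + c) * (1 - p) ^ (n - hammingNorm (Φ (a, b) + c)))
        = (min (p ^ hammingNorm a * (1 - p) ^ (D - hammingNorm a))
              (p ^ (D - hammingNorm a) * (1 - p) ^ hammingNorm a))
          * (p ^ hammingNorm b * (1 - p) ^ ((n - D) - hammingNorm b)) := by
      intro a b
      have hna := hammingNorm_le' a
      have hnb := hammingNorm_le' b
      have h1 : hammingNorm (Φ (a, b)) = hammingNorm a + hammingNorm b := K1 a b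
      have h2 : hammingNorm (Φ (a, b) + c) = (D - hammingNorm a) + hammingNorm b := by
        rw [K2 a b, K1, norm_compl a]
      rw [h1, h2]
      have e1 : p ^ (hammingNorm a + hammingNorm b)
            * (1 - p) ^ (n - (hammingNorm a + hammingNorm b))
          = (p ^ hammingNorm a * (1 - p) ^ (D - hammingNorm a))
            * (p ^ hammingNorm b * (1 - p) ^ ((n - D) - hammingNorm b)) := by
        rw [pow_add, show n - (hammingNorm a + hammingNorm b)
          = (D - hammingNorm a) + ((n - D) - hammingNorm b) by omega, pow_add]
        ring
      have e2 : p ^ ((D - hammingNorm a) + hammingNorm b)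
            * (1 - p) ^ (n - ((D - hammingNorm a) + hammingNorm b))
          = (p ^ (D - hammingNorm a) * (1 - p) ^ hammingNorm a)
            * (p ^ hammingNorm b * (1 - p) ^ ((n - D) - hammingNorm b)) := by
        rw [pow_add, show n - ((D - hammingNorm a) + hammingNorm b)
          = hammingNorm a + ((n - D) - hammingNorm b) by omega, pow_add]
        ring
      rw [e1, e2, ← min_mul_of_nonneg _ _ (by positivity)]
    simp_rw [hterm]
    have hN : ∑ b : Fin (n - D) → ZMod 2,
        p ^ hammingNorm b * (1 - p) ^ ((n - D) - hammingNorm b) = 1 := bernPr_univ p (n - D)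
    apply Finset.sum_congr rfl
    intro a _
    rw [← Finset.mul_sum, hN, mul_one]
  -- Step A : the middle sum lower-bounds the sum of two failure probabilities
  have keyA : ∑ η : Fin n → ZMod 2,
      min (p ^ hammingNorm η * (1 - p) ^ (n - hammingNorm η))
          (p ^ hammingNorm (η + c) * (1 - p) ^ (n - hammingNorm (η + c)))
      ≤ bernPr p (Finset.univ.filter fun η : Fin n → ZMod 2 => dec (enc x + η) ≠ x)
        + bernPr p (Finset.univ.filter fun η : Fin n → ZMod 2 => dec (enc y + η) ≠ y) := by
    have hPfx : bernPr p (Finset.univ.filter fun η : Fin n → ZMod 2 => dec (enc x + η) ≠ x)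
        = ∑ η : Fin n → ZMod 2, if dec (enc x + η) ≠ x
            then p ^ hammingNorm η * (1 - p) ^ (n - hammingNorm η) else 0 := by
      rw [bernPr, Finset.sum_filter]
    have hPfy : bernPr p (Finset.univ.filter fun η : Fin n → ZMod 2 => dec (enc y + η) ≠ y)
        = ∑ η : Fin n → ZMod 2, if dec (enc y + (η + c)) ≠ y
            then p ^ hammingNorm (η + c) * (1 - p) ^ (n - hammingNorm (η + c)) else 0 := by
      rw [bernPr, Finset.sum_filter, ← Equiv.sum_comp (Equiv.addRight c)
        (fun η : Fin n → ZMod 2 => if dec (enc y + η) ≠ y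
          then p ^ hammingNorm η * (1 - p) ^ (n - hammingNorm η) else 0)]
      rfl
    rw [hPfx, hPfy, ← Finset.sum_add_distrib]
    apply Finset.sum_le_sum
    intro η _
    have hz : enc y + (η + c) = enc x + η := by rw [hc]; abel
    rw [hz]
    by_cases hd : dec (enc x + η) = x
    · have hneq : dec (enc x + η) ≠ y := fun hcon => hxy (by rw [← hd, hcon])
      rw [if_neg (by simpa using hd), if_pos hneq]
      simpa using min_le_right (p ^ hammingNorm η * (1 - p) ^ (n - hammingNorm η))
        (p ^ hammingNorm (η + c) * (1 - p) ^ (n - hammingNorm (η + c)))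
    · rw [if_pos hd]
      have h2 : (0:ℝ) ≤ if dec (enc x + η) ≠ y
          then p ^ hammingNorm (η + c) * (1 - p) ^ (n - hammingNorm (η + c)) else 0 := by
        split_ifs
        · exact hW0 n _
        · exact le_rfl
      have h3 := min_le_left (p ^ hammingNorm η * (1 - p) ^ (n - hammingNorm η))
        (p ^ hammingNorm (η + c) * (1 - p) ^ (n - hammingNorm (η + c)))
      linarith
  -- conclusion
  have hsup : ∀ v, bernPr p (Finset.univ.filter fun η : Fin n → ZMod 2 => dec (enc v + η) ≠ v)
      ≤ ⨆ v, bernPr p (Finset.univ.filter fun η : Fin n → ZMod 2 => dec (enc v + η) ≠ v) :=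
    fun v => le_ciSup (f := fun v => bernPr p
      (Finset.univ.filter fun η : Fin n → ZMod 2 => dec (enc v + η) ≠ v))
      (Finite.bddAbove_range _) v
  have hC := stepC hp0 hp D
  linarith [hsup x, hsup y, keyA, keyB, hC]
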